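/- arXiv:2111.07006 — 2 statements merged into one kernel-verified Lean document; each statement's English description precedes it below -/
import Mathlib

section
/- If A is a totally unimodular m×n integer matrix and b is an integral vector in Z^m, then every extreme point of the polyhedron P = {x in R^n : Ax = b, x ≥ 0} (when nonempty) is integral. -/
open Matrix

/-- A matrix with linearly independent columns has an invertible square row-submatrix. -/
lemma exists_invertible_row_submatrix {m k : ℕ} (M : Matrix (Fin m) (Fin k) ℝ)
    (h : LinearIndependent ℝ (fun l => Mᵀ l)) :
    ∃ r : Fin k → Fin m, Function.Injective r ∧ (M.submatrix r id).det ≠ 0 := by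
  have hrank : Mᵀ.rank = k := by
    simpa using LinearIndependent.rank_matrix (M := Mᵀ) h
  have hM : M.rank = k := by rw [← Matrix.rank_transpose]; exact hrank
  have hspan : Submodule.span ℝ (Set.range M) = ⊤ := by
    apply Submodule.eq_top_of_finrank_eq
    rw [show Set.range M = Set.range M.row from rfl, ← Matrix.rank_eq_finrank_span_row, hM]
    simp [Module.finrank_pi]
  obtain ⟨t, hts, htspan, htli⟩ := exists_linearIndependent ℝ (Set.range M)
  rw [hspan] at htspan
  have hb : Module.Basis t ℝ (Fin k → ℝ) := Module.Basis.mk htli (by rw [Subtype.range_coe, htspan])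
  haveI : Fintype t := FiniteDimensional.fintypeBasisIndex hb
  have hcard : Fintype.card t = k := by
    have := Module.finrank_eq_card_basis hb
    simp [Module.finrank_pi] at this
    rw [← Nat.card_eq_fintype_card, Nat.card_coe_set_eq]
    omega
  let e : Fin k ≃ t := (Fintype.equivFinOfCardEq hcard).symm
  have hchoice : ∀ l : Fin k, ∃ i : Fin m, M i = (e l : Fin k → ℝ) := fun l => hts (e l).2
  choose r hr using hchoice
  refine ⟨r, ?_, ?_⟩
  · intro a b hab
    apply e.injective
    apply Subtype.ext
    rw [← hr a, ← hr b, hab]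
  · have hli : LinearIndependent ℝ (fun l => (M.submatrix r id) l) := by
      have : (fun l => (M.submatrix r id) l) = (fun (v : t) => (v : Fin k → ℝ)) ∘ e := by
        funext l
        simp only [Function.comp]
        rw [← hr l]
        rfl
      rw [this]
      exact htli.comp e e.injective
    have := Matrix.linearIndependent_rows_iff_isUnit.mp hli
    have : IsUnit (M.submatrix r id).det := (Matrix.isUnit_iff_isUnit_det _).mp this
    exact this.ne_zero

lemma extreme_support_indep {m n : ℕ} (Ar : Matrix (Fin m) (Fin n) ℝ) (br : Fin m → ℝ)
    (x : Fin n → ℝ)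
    (hx : x ∈ Set.extremePoints ℝ {y : Fin n → ℝ | Ar *ᵥ y = br ∧ ∀ j, 0 ≤ y j})
    (c : Fin n → ℝ) (hc : Ar *ᵥ c = 0) (hsupp : ∀ j, x j = 0 → c j = 0) : c = 0 := by
  classical
  by_contra hc0
  obtain ⟨j0, hj0⟩ : ∃ j, c j ≠ 0 := by
    by_contra h
    push_neg at h
    exact hc0 (funext h)
  obtain ⟨⟨hxeq, hxnn⟩, hext⟩ := hx
  have hxpos : ∀ j : Fin n, x j ≠ 0 → 0 < x j := fun j h => lt_of_le_of_ne (hxnn j) (Ne.symm h)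
  set ε : ℝ := Finset.univ.inf' (Finset.univ_nonempty_iff.mpr ⟨j0⟩)
      (fun j => if x j = 0 then 1 else x j / (|c j| + 1)) with hε
  have hεpos : 0 < ε := by
    rw [hε, Finset.lt_inf'_iff]
    intro j _
    by_cases h : x j = 0
    · simp [h]
    · simp only [h, if_neg]
      refine div_pos (hxpos j h) ?_
      positivity
  have hbound : ∀ j, ε * |c j| ≤ x j ∨ c j = 0 := by
    intro j
    by_cases h : x j = 0
    · exact Or.inr (hsupp j h)
    · left
      have h1 : ε ≤ x j / (|c j| + 1) := by
        rw [hε]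
        refine Finset.inf'_le_of_le _ (Finset.mem_univ j) ?_
        simp [h]
      have h2 : ε * (|c j| + 1) ≤ x j := by
        rw [← le_div_iff₀ (by positivity)] at *
        exact h1
      nlinarith [abs_nonneg (c j), hεpos]
  have hnnpos : ∀ j, 0 ≤ x j - ε * c j ∧ 0 ≤ x j + ε * c j := by
    intro j
    rcases hbound j with h | h
    · constructor <;> nlinarith [abs_nonneg (c j), neg_abs_le (c j), le_abs_self (c j), hεpos]
    · simp [h, hxnn j]
  set y : Fin n → ℝ := x - ε • c with hy
  set z : Fin n → ℝ := x + ε • c with hz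
  have hyP : y ∈ {y : Fin n → ℝ | Ar *ᵥ y = br ∧ ∀ j, 0 ≤ y j} := by
    constructor
    · rw [hy, Matrix.mulVec_sub, Matrix.mulVec_smul, hc, hxeq]
      simp
    · intro j
      simp only [hy, Pi.sub_apply, Pi.smul_apply, smul_eq_mul]
      linarith [(hnnpos j).1]
  have hzP : z ∈ {y : Fin n → ℝ | Ar *ᵥ y = br ∧ ∀ j, 0 ≤ y j} := by
    constructor
    · rw [hz, Matrix.mulVec_add, Matrix.mulVec_smul, hc, hxeq]
      simp
    · intro j
      simp only [hz, Pi.add_apply, Pi.smul_apply, smul_eq_mul]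
      linarith [(hnnpos j).2]
  have hseg : x ∈ openSegment ℝ y z := by
    refine ⟨1/2, 1/2, by norm_num, by norm_num, by norm_num, ?_⟩
    rw [hy, hz]
    funext j
    simp only [Pi.add_apply, Pi.smul_apply, Pi.sub_apply, smul_eq_mul]
    ring
  have := (hext hyP hzP hseg)
  rw [hy] at this
  have hεc : ε • c = 0 := by
    have := sub_eq_self.mp this
    exact this
  have : c = 0 := by
    have := congr_fun hεc j0
    simp only [Pi.smul_apply, smul_eq_mul, Pi.zero_apply] at this
    rcases mul_eq_zero.mp this with h | h
    · exact absurd h (ne_of_gt hεpos)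
    · exact absurd h hj0
  exact absurd (congr_fun this j0) hj0

/-- If `A` is a totally unimodular `m × n` integer matrix and `b` is an integral vector,
then every extreme point of the polyhedron `P = {x : ℝⁿ | Ax = b, x ≥ 0}` is integral. -/
theorem tu_polyhedron_integral_extreme_points
    (m n : ℕ) (A : Matrix (Fin m) (Fin n) ℤ) (b : Fin m → ℤ)
    (hA : A.IsTotallyUnimodular)
    (P : Set (Fin n → ℝ))
    (hP : P = {x : Fin n → ℝ |
      (A.map (Int.cast : ℤ → ℝ)) *ᵥ x = (fun i => (b i : ℝ)) ∧ ∀ j, 0 ≤ x j}) :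
    ∀ x ∈ Set.extremePoints ℝ P, ∀ j, ∃ z : ℤ, x j = (z : ℝ) := by
  classical
  subst hP
  intro x hx j
  set Ar := A.map (Int.cast : ℤ → ℝ) with hAr
  obtain ⟨hxeq, hxnn⟩ := hx.1
  have step1 : ∀ c : Fin n → ℝ, Ar *ᵥ c = 0 → (∀ j, x j = 0 → c j = 0) → c = 0 :=
    fun c hc hs => extreme_support_indep Ar _ x hx c hc hs
  by_cases hxj : x j = 0
  · exact ⟨0, by simp [hxj]⟩
  set k := Fintype.card {j : Fin n // x j ≠ 0} with hk
  set e : Fin k ≃ {j : Fin n // x j ≠ 0} := (Fintype.equivFin {j : Fin n // x j ≠ 0}).symm with he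
  -- sums over support
  have hsum : ∀ f : Fin n → ℝ, (∀ j, x j = 0 → f j = 0) →
      ∑ j, f j = ∑ l, f (e l) := by
    intro f hf
    have h1 : ∑ j, f j = ∑ j ∈ Finset.univ.filter (fun j => x j ≠ 0), f j := by
      symm
      apply Finset.sum_filter_of_ne
      intro j _ hfj
      intro h
      exact hfj (hf j h)
    have h2 : ∑ j ∈ Finset.univ.filter (fun j => x j ≠ 0), f j
        = ∑ s : {j : Fin n // x j ≠ 0}, f s := by
      exact Finset.sum_subtype _ (fun j => by simp) f
    rw [h1, h2, ← Equiv.sum_comp e (fun s => f s)]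
  set M : Matrix (Fin m) (Fin k) ℝ := fun i l => Ar i (e l) with hM
  have hli : LinearIndependent ℝ (fun l => Mᵀ l) := by
    rw [Fintype.linearIndependent_iff]
    intro g hg l
    set c : Fin n → ℝ := fun j => if h : x j = 0 then 0 else g (e.symm ⟨j, h⟩) with hcdef
    have hczero : ∀ j, x j = 0 → c j = 0 := fun j h => by simp [hcdef, h]
    have hce : ∀ q : Fin k, c (e q) = g q := by
      intro q
      have hq : x (e q) ≠ 0 := (e q).2
      simp only [hcdef, dif_neg hq]
      have h2 : (⟨(e q : Fin n), hq⟩ : {j : Fin n // x j ≠ 0}) = e q := Subtype.coe_eta _ _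
      rw [h2, e.symm_apply_apply]
    have hAc : Ar *ᵥ c = 0 := by
      funext i
      show ∑ jj, Ar i jj * c jj = 0
      rw [hsum (fun jj => Ar i jj * c jj) (fun jj h => mul_eq_zero_of_right _ (hczero jj h))]
      have hgi := congr_fun hg i
      simp only [Finset.sum_apply, Pi.smul_apply, smul_eq_mul, Pi.zero_apply] at hgi
      have hsum2 : ∑ q : Fin k, Ar i ((e q : Fin n)) * c (e q) = ∑ q : Fin k, g q * Mᵀ q i :=
        Finset.sum_congr rfl fun q _ => by rw [hce q]; exact mul_comm _ _
      rw [hsum2]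
      exact hgi
    have hc0 := step1 c hAc hczero
    rw [← hce l, hc0]
    rfl
  obtain ⟨r, hrinj, hrdet⟩ := exists_invertible_row_submatrix M hli
  set B : Matrix (Fin k) (Fin k) ℤ := fun p q => A (r p) (e q) with hB
  have hBM : M.submatrix r id = B.map (Int.cast : ℤ → ℝ) := by
    funext p q
    simp [hB, hM, hAr, Matrix.submatrix_apply, Matrix.map_apply]
    rfl
  have hdetBR : ((B.det : ℤ) : ℝ) ≠ 0 := by
    have : (B.map (Int.cast : ℤ → ℝ)).det = ((B.det : ℤ) : ℝ) :=
      (RingHom.map_det (Int.castRingHom ℝ) B).symm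
    rw [← this, ← hBM]
    exact hrdet
  have hdetB : B.det ≠ 0 := fun h => hdetBR (by rw [h]; simp)
  have hdetTU : B.det ∈ Set.range SignType.cast := by
    have hginj : Function.Injective (fun q : Fin k => (e q : Fin n)) := by
      intro a b hab
      exact e.injective (Subtype.ext hab)
    exact hA k r (fun q => (e q : Fin n)) hrinj hginj
  have hBunit : IsUnit B.det := by
    obtain ⟨s, hs⟩ := hdetTU
    cases s with
    | zero => exact absurd hs.symm (by simpa using hdetB)
    | pos => rw [← hs]; simp
    | neg => rw [← hs]; simpa using isUnit_one.neg
  obtain ⟨B', hB'⟩ : ∃ B' : Matrix (Fin k) (Fin k) ℤ, B' * B = 1 :=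
    ⟨B⁻¹, Matrix.nonsing_inv_mul B hBunit⟩
  set xS : Fin k → ℝ := fun l => x (e l) with hxS
  have hsys : (B.map (Int.cast : ℤ → ℝ)) *ᵥ xS = fun p => (b (r p) : ℝ) := by
    funext p
    have h1 : (Ar *ᵥ x) (r p) = (b (r p) : ℝ) := by rw [hxeq]
    show ∑ q, (B.map (Int.cast : ℤ → ℝ)) p q * xS q = (b (r p) : ℝ)
    rw [← h1]
    show ∑ q, (B.map (Int.cast : ℤ → ℝ)) p q * xS q = ∑ jj, Ar (r p) jj * x jj
    rw [hsum (fun jj => Ar (r p) jj * x jj) (fun jj h => mul_eq_zero_of_right _ h)]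
    apply Finset.sum_congr rfl
    intro q _
    simp [hB, hM, hAr, hxS, Matrix.map_apply]
    left; rfl
  have hmul : (B'.map (Int.cast : ℤ → ℝ)) * (B.map (Int.cast : ℤ → ℝ)) = 1 := by
    have h1 : (B'.map (Int.cast : ℤ → ℝ)) * (B.map (Int.cast : ℤ → ℝ))
        = (B' * B).map (Int.cast : ℤ → ℝ) := (Matrix.map_mul (f := Int.castRingHom ℝ)).symm
    rw [h1, hB']
    exact Matrix.map_one _ (by simp) (by simp)
  have hsol : xS = (B'.map (Int.cast : ℤ → ℝ)) *ᵥ (fun p => (b (r p) : ℝ)) := by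
    rw [← hsys, Matrix.mulVec_mulVec, hmul, Matrix.one_mulVec]
  refine ⟨∑ p, B' (e.symm ⟨j, hxj⟩) p * b (r p), ?_⟩
  have hxj' : x j = xS (e.symm ⟨j, hxj⟩) := by
    simp [hxS]
  rw [hxj', hsol]
  show ∑ p, (B'.map (Int.cast : ℤ → ℝ)) (e.symm ⟨j, hxj⟩) p * (b (r p) : ℝ) = _
  push_cast
  apply Finset.sum_congr rfl
  intro p _
  simp [Matrix.map_apply]
end

section
/- An m×n matrix with entries in {0,1,-1} is totally unimodular if for every subset C of columns there exists a partition (C1, C2) of C such that for every row i, |sum over j in C1 of a_ij − sum over j in C2 of a_ij| ≤ 1. -/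
lemma gh_mem_signrange {r : ℤ} (h : r = 0 ∨ r = 1 ∨ r = -1) :
    r ∈ Set.range (SignType.cast : SignType → ℤ) := by
  rcases h with h | h | h
  · exact ⟨0, h.symm⟩
  · exact ⟨1, h.symm⟩
  · exact ⟨-1, by simp [h]⟩

lemma gh_of_signrange {r : ℤ} (h : r ∈ Set.range (SignType.cast : SignType → ℤ)) :
    r = 0 ∨ r = 1 ∨ r = -1 := by
  obtain ⟨s, rfl⟩ := h
  cases s <;> simp

lemma gh_adjugate_col_zero {k : ℕ} (M : Matrix (Fin (k+1)) (Fin (k+1)) ℤ) (i : Fin (k+1)) :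
    M.adjugate i 0 = (-1 : ℤ)^(i : ℕ) * (M.submatrix Fin.succ i.succAbove).det := by
  rw [Matrix.adjugate_apply, Matrix.det_succ_row_zero]
  rw [Finset.sum_eq_single i]
  · have h2 : (M.updateRow 0 (Pi.single i 1)).submatrix Fin.succ i.succAbove
        = M.submatrix Fin.succ i.succAbove := by
      ext a b
      simp [Matrix.updateRow_ne (Fin.succ_ne_zero a)]
    simp [Matrix.updateRow_self, h2]
  · intro j _ hj
    simp [Matrix.updateRow_self, Pi.single_apply, hj.symm]
  · simp

open Finset in
/-- Ghouila-Houri (one direction): an `m × n` matrix with entries in `{0, 1, -1}` is totally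
unimodular if every subset `C` of columns can be partitioned into `(C₁, C₂)` such that for every
row `i`, `|∑_{j ∈ C₁} a_{ij} - ∑_{j ∈ C₂} a_{ij}| ≤ 1`. -/
theorem ghouila_houri_column_condition_implies_tu
    (m n : ℕ) (A : Matrix (Fin m) (Fin n) ℤ)
    (hentries : ∀ i j, A i j = 0 ∨ A i j = 1 ∨ A i j = -1)
    (hpart : ∀ C : Finset (Fin n), ∃ C₁ C₂ : Finset (Fin n),
      C₁ ∪ C₂ = C ∧ Disjoint C₁ C₂ ∧
      ∀ i : Fin m, |(∑ j ∈ C₁, A i j) - ∑ j ∈ C₂, A i j| ≤ 1) :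
    A.IsTotallyUnimodular := by
  intro k
  induction k using Nat.strong_induction_on with
  | _ k IH =>
  obtain _ | k := k
  · intro f g hf hg
    exact gh_mem_signrange (Or.inr (Or.inl Matrix.det_fin_zero))
  intro f g hf hg
  apply gh_mem_signrange
  set B := A.submatrix f g with hBdef
  by_cases hd : B.det = 0
  · exact Or.inl hd
  right
  have hbent : ∀ i, B.adjugate i 0 = 0 ∨ B.adjugate i 0 = 1 ∨ B.adjugate i 0 = -1 := by
    intro i
    rw [gh_adjugate_col_zero]
    have hmin := gh_of_signrange (IH k (Nat.lt_succ_self k) (f ∘ Fin.succ) (g ∘ i.succAbove)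
      (hf.comp (Fin.succ_injective k)) (hg.comp (Fin.succAbove_right_injective)))
    rw [← Matrix.submatrix_submatrix, ← hBdef] at hmin
    rcases neg_one_pow_eq_or ℤ (i : ℕ) with h1 | h1 <;>
      rcases hmin with h2 | h2 | h2 <;> simp [h1, h2]
  set b : Fin (k+1) → ℤ := fun i => B.adjugate i 0 with hbdef
  have hmulb : ∀ i, B.mulVec b i = B.det * (if i = 0 then 1 else 0) := by
    intro i
    have h := congrFun (congrFun (Matrix.mul_adjugate B) i) 0
    simp only [Matrix.mul_apply, Matrix.smul_apply, Matrix.one_apply, smul_eq_mul] at h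
    simpa [Matrix.mulVec, dotProduct, hbdef] using h
  have hbne : ∃ l, b l ≠ 0 := by
    by_contra h
    push_neg at h
    have h0 := hmulb 0
    rw [if_pos rfl, mul_one] at h0
    simp only [Matrix.mulVec, dotProduct, h, mul_zero, Finset.sum_const_zero] at h0
    exact hd h0.symm
  obtain ⟨l₀, hl₀⟩ := hbne
  set C : Finset (Fin n) := (Finset.univ.filter fun l => b l ≠ 0).image g with hCdef
  have hmemC : ∀ l : Fin (k+1), g l ∈ C ↔ b l ≠ 0 := by
    intro l
    simp only [hCdef, Finset.mem_image, Finset.mem_filter, Finset.mem_univ, true_and]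
    constructor
    · rintro ⟨l', h', he⟩
      rwa [hg he] at h'
    · intro h
      exact ⟨l, h, rfl⟩
  obtain ⟨C₁, C₂, hun, hdis, hrow⟩ := hpart C
  have hsub1 : C₁ ⊆ C := hun ▸ Finset.subset_union_left
  have hsub2 : C₂ ⊆ C := hun ▸ Finset.subset_union_right
  set y : Fin (k+1) → ℤ := fun l => if g l ∈ C₁ then 1 else if g l ∈ C₂ then -1 else 0 with hydef
  have hy0 : ∀ l, b l = 0 → y l = 0 := by
    intro l hl
    have h1 : g l ∉ C₁ := fun h => ((hmemC l).1 (hsub1 h)) hl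
    have h2 : g l ∉ C₂ := fun h => ((hmemC l).1 (hsub2 h)) hl
    simp [hydef, h1, h2]
  have hy1 : ∀ l, b l ≠ 0 → y l = 1 ∨ y l = -1 := by
    intro l hl
    have : g l ∈ C₁ ∪ C₂ := hun ▸ ((hmemC l).2 hl)
    rcases Finset.mem_union.1 this with h | h
    · exact Or.inl (by simp [hydef, h])
    · have h1 : g l ∉ C₁ := Finset.disjoint_right.1 hdis h
      exact Or.inr (by simp [hydef, h1, h])
  -- key identity
  have hkey : ∀ i, B.mulVec y i = (∑ j ∈ C₁, A (f i) j) - ∑ j ∈ C₂, A (f i) j := by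
    intro i
    have e1 : ∑ j ∈ C₁, A (f i) j = ∑ l ∈ Finset.univ.filter (fun l => g l ∈ C₁), B i l := by
      have hC1 : C₁ = (Finset.univ.filter fun l => g l ∈ C₁).image g := by
        ext j
        simp only [Finset.mem_image, Finset.mem_filter, Finset.mem_univ, true_and]
        constructor
        · intro hj
          have hj' : ∃ a, ¬ b a = 0 ∧ g a = j := by simpa [hCdef] using hsub1 hj
          obtain ⟨l, -, he⟩ := hj'
          exact ⟨l, by rwa [he], he⟩
        · rintro ⟨l, hl, rfl⟩
          exact hl
      conv_lhs => rw [hC1]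
      rw [Finset.sum_image (fun a _ c _ h => hg h)]
      rfl
    have e2 : ∑ j ∈ C₂, A (f i) j = ∑ l ∈ Finset.univ.filter (fun l => g l ∈ C₂), B i l := by
      have hC2 : C₂ = (Finset.univ.filter fun l => g l ∈ C₂).image g := by
        ext j
        simp only [Finset.mem_image, Finset.mem_filter, Finset.mem_univ, true_and]
        constructor
        · intro hj
          have hj' : ∃ a, ¬ b a = 0 ∧ g a = j := by simpa [hCdef] using hsub2 hj
          obtain ⟨l, -, he⟩ := hj'
          exact ⟨l, by rwa [he], he⟩
        · rintro ⟨l, hl, rfl⟩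
          exact hl
      conv_lhs => rw [hC2]
      rw [Finset.sum_image (fun a _ c _ h => hg h)]
      rfl
    have hy' : ∀ l, y l = (if g l ∈ C₁ then (1:ℤ) else 0) - (if g l ∈ C₂ then 1 else 0) := by
      intro l
      by_cases h1 : g l ∈ C₁
      · have h2 : g l ∉ C₂ := Finset.disjoint_left.1 hdis h1
        simp [hydef, h1, h2]
      · by_cases h2 : g l ∈ C₂ <;> simp [hydef, h1, h2]
    rw [e1, e2]
    simp only [Matrix.mulVec, dotProduct, hy', mul_sub, Finset.sum_sub_distrib,
      mul_ite, mul_one, mul_zero, Finset.sum_filter]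
  have habs : ∀ i, |B.mulVec y i| ≤ 1 := fun i => (hkey i) ▸ hrow (f i)
  have hpar : ∀ l, Even (y l - b l) := by
    intro l
    by_cases hl : b l = 0
    · simp [hy0 l hl, hl]
    · have hbl : b l = 0 ∨ b l = 1 ∨ b l = -1 := hbent l
      rw [Int.even_iff]
      rcases hy1 l hl with h | h <;> rcases hbl with h' | h' | h' <;> omega
  have hparv : ∀ i, Even (B.mulVec y i - B.mulVec b i) := by
    intro i
    simp only [Matrix.mulVec, dotProduct, ← Finset.sum_sub_distrib, ← mul_sub]
    induction (Finset.univ : Finset (Fin (k+1))) using Finset.induction with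
    | empty => simp
    | insert a s hni ih =>
      rw [Finset.sum_insert hni]
      exact ((hpar _).mul_left _).add ih
  have hcancel : ∀ v : Fin (k+1) → ℤ, B.mulVec v = 0 → v = 0 := by
    intro v hv
    have h : B.adjugate.mulVec (B.mulVec v) = B.adjugate.mulVec 0 := by rw [hv]
    rw [Matrix.mulVec_mulVec, Matrix.adjugate_mul, Matrix.smul_mulVec,
      Matrix.one_mulVec, Matrix.mulVec_zero] at h
    funext l
    have := congrFun h l
    simp only [Pi.smul_apply, smul_eq_mul, Pi.zero_apply] at this
    exact (mul_eq_zero.1 this).resolve_left hd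
  have hzero : ∀ i, i ≠ 0 → B.mulVec y i = 0 := by
    intro i hi
    have he : Even (B.mulVec y i) := by
      have h := hparv i
      rw [hmulb i] at h
      simpa [hi] using h
    have h := habs i
    rw [abs_le] at h
    obtain ⟨r, hr⟩ := he
    omega
  have hyl₀ : y l₀ = 1 ∨ y l₀ = -1 := hy1 l₀ hl₀
  have hodd0 : B.mulVec y 0 = 1 ∨ B.mulVec y 0 = -1 := by
    have he := hparv 0
    rw [hmulb 0] at he
    simp only [if_pos rfl, mul_one] at he
    have h := habs 0
    rw [abs_le] at h
    rcases Int.even_or_odd (B.mulVec y 0) with hx | hx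
    · exfalso
      have hdet : Even B.det := by
        have := hx.sub he
        simpa using this
      have h0 : B.mulVec y 0 = 0 := by
        obtain ⟨r, hr⟩ := hx
        omega
      have hall : B.mulVec y = 0 := by
        funext i
        by_cases hi : i = 0
        · simpa [hi] using h0
        · simpa using hzero i hi
      have := congrFun (hcancel y hall) l₀
      simp only [Pi.zero_apply] at this
      rcases hyl₀ with hh | hh <;> omega
    · obtain ⟨r, hr⟩ := hx
      omega
  set ε := B.mulVec y 0 with hεdef
  have heq : ∀ l, B.det * y l - ε * b l = 0 := by
    have hveczero : B.mulVec (fun l => B.det * y l - ε * b l) = 0 := by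
      funext i
      have expand : B.mulVec (fun l => B.det * y l - ε * b l) i
          = B.det * B.mulVec y i - ε * B.mulVec b i := by
        simp only [Matrix.mulVec, dotProduct, Finset.mul_sum, mul_sub,
          ← Finset.sum_sub_distrib]
        exact Finset.sum_congr rfl fun l _ => by ring
      rw [expand, hmulb i]
      by_cases hi : i = 0
      · subst hi
        rw [← hεdef]
        simp only [eq_self_iff_true, if_true, mul_one, Pi.zero_apply]
        ring
      · rw [hzero i hi]
        simp [hi]
    intro l
    exact congrFun (hcancel _ hveczero) l
  have h1 := heq l₀
  have hbl : b l₀ = 0 ∨ b l₀ = 1 ∨ b l₀ = -1 := hbent l₀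
  rcases hbl with hb0 | hb0 | hb0
  · exact absurd hb0 hl₀
  all_goals
    rcases hyl₀ with h | h <;> rcases hodd0 with hε | hε <;>
      rw [h, hb0, hε] at h1 <;> omega
end
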